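/- The semigroup presented by ⟨A, B, C, D, Ā, B̄, C̄, D̄ | A = ABCD, B = BCDD̄C̄, C = CDD̄, D = DD̄C̄B̄, Ā = D̄C̄B̄Ā, B̄ = CDD̄C̄B̄, C̄ = DD̄C̄, D̄ = BCDD̄⟩ is isomorphic to the semigroup presented by ⟨A, B, C, D, E | A = ABCD, B = BCDB, C = CDBC, D = DBCD, E = DBCE⟩. -/

import Mathlib

/-- The 8-letter alphabet `A, B, C, D, Ā, B̄, C̄, D̄` of the first presentation. -/
inductive Alpha1 : Type
  | A | B | C | D | Abar | Bbar | Cbar | Dbar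
  deriving DecidableEq

/-- The 5-letter alphabet `A, B, C, D, E` of the second presentation. -/
inductive Alpha2 : Type
  | A | B | C | D | E
  deriving DecidableEq

namespace Alpha1
open FreeSemigroup

private def w : Alpha1 → FreeSemigroup Alpha1 := FreeSemigroup.of

/-- The relations `A = ABCD`, `B = BCDD̄C̄`, `C = CDD̄`, `D = DD̄C̄B̄`, `Ā = D̄C̄B̄Ā`,
`B̄ = CDD̄C̄B̄`, `C̄ = DD̄C̄`, `D̄ = BCDD̄`. -/
def rels : FreeSemigroup Alpha1 → FreeSemigroup Alpha1 → Prop := fun u v =>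
  (u = w A ∧ v = w A * w B * w C * w D) ∨
  (u = w B ∧ v = w B * w C * w D * w Dbar * w Cbar) ∨
  (u = w C ∧ v = w C * w D * w Dbar) ∨
  (u = w D ∧ v = w D * w Dbar * w Cbar * w Bbar) ∨
  (u = w Abar ∧ v = w Dbar * w Cbar * w Bbar * w Abar) ∨
  (u = w Bbar ∧ v = w C * w D * w Dbar * w Cbar * w Bbar) ∨
  (u = w Cbar ∧ v = w D * w Dbar * w Cbar) ∨
  (u = w Dbar ∧ v = w B * w C * w D * w Dbar)

end Alpha1

namespace Alpha2
open FreeSemigroup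

private def w : Alpha2 → FreeSemigroup Alpha2 := FreeSemigroup.of

/-- The relations `A = ABCD`, `B = BCDB`, `C = CDBC`, `D = DBCD`, `E = DBCE`. -/
def rels : FreeSemigroup Alpha2 → FreeSemigroup Alpha2 → Prop := fun u v =>
  (u = w A ∧ v = w A * w B * w C * w D) ∨
  (u = w B ∧ v = w B * w C * w D * w B) ∨
  (u = w C ∧ v = w C * w D * w B * w C) ∨
  (u = w D ∧ v = w D * w B * w C * w D) ∨
  (u = w E ∧ v = w D * w B * w C * w E)

end Alpha2

namespace IsoProof
open FreeSemigroup

abbrev Q1 : Type := (conGen Alpha1.rels).Quotient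
abbrev Q2 : Type := (conGen Alpha2.rels).Quotient

/-- Lift of a `MulHom` through a congruence at the `Mul` level. -/
def conLift {M P : Type*} [Mul M] [Mul P] (c : Con M) (f : M →ₙ* P)
    (H : ∀ a b, c a b → f a = f b) : c.Quotient →ₙ* P where
  toFun q := Con.liftOn q f H
  map_mul' x y := Con.induction_on₂ x y fun a b => by
    rw [← Con.coe_mul]
    exact map_mul f a b

/-- The natural map `M →ₙ* c.Quotient`. -/
def conMk {M : Type*} [Mul M] (c : Con M) : M →ₙ* c.Quotient where
  toFun := (↑·)
  map_mul' _ _ := rfl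

lemma rel1 {u v : FreeSemigroup Alpha1} (h : Alpha1.rels u v) : (u : Q1) = v :=
  (Con.eq _).2 (ConGen.Rel.of u v h)

lemma rel2 {u v : FreeSemigroup Alpha2} (h : Alpha2.rels u v) : (u : Q2) = v :=
  (Con.eq _).2 (ConGen.Rel.of u v h)

abbrev x1 (a : Alpha1) : Q1 := (Alpha1.w a : Q1)
abbrev x2 (a : Alpha2) : Q2 := (Alpha2.w a : Q2)

section P1side
open Alpha1

abbrev pA : Q1 := x1 A
abbrev pB : Q1 := x1 B
abbrev pC : Q1 := x1 C
abbrev pD : Q1 := x1 D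
abbrev pa : Q1 := x1 Abar
abbrev pb : Q1 := x1 Bbar
abbrev pc : Q1 := x1 Cbar
abbrev pd : Q1 := x1 Dbar

lemma L1 : pA * pB * pC * pD = pA := by
  simpa using (rel1 (Or.inl ⟨rfl, rfl⟩)).symm
lemma L2 : pB * pC * pD * pd * pc = pB := by
  simpa using (rel1 (Or.inr (Or.inl ⟨rfl, rfl⟩))).symm
lemma L3 : pC * pD * pd = pC := by
  simpa using (rel1 (Or.inr (Or.inr (Or.inl ⟨rfl, rfl⟩)))).symm
lemma L4 : pD * pd * pc * pb = pD := by
  simpa using (rel1 (Or.inr (Or.inr (Or.inr (Or.inl ⟨rfl, rfl⟩))))).symm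
lemma L5 : pd * pc * pb * pa = pa := by
  simpa using (rel1 (Or.inr (Or.inr (Or.inr (Or.inr (Or.inl ⟨rfl, rfl⟩)))))).symm
lemma L6 : pC * pD * pd * pc * pb = pb := by
  simpa using (rel1 (Or.inr (Or.inr (Or.inr (Or.inr (Or.inr (Or.inl ⟨rfl, rfl⟩))))))).symm
lemma L7 : pD * pd * pc = pc := by
  simpa using (rel1 (Or.inr (Or.inr (Or.inr (Or.inr (Or.inr (Or.inr (Or.inl ⟨rfl, rfl⟩)))))))).symm
lemma L8 : pB * pC * pD * pd = pd := by
  simpa using (rel1 (Or.inr (Or.inr (Or.inr (Or.inr (Or.inr (Or.inr (Or.inr ⟨rfl, rfl⟩)))))))).symm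

lemma K1 : pB * pC = pd := by
  calc pB * pC = pB * (pC * pD * pd) := by rw [L3]
    _ = pB * pC * pD * pd := by simp only [mul_assoc]
    _ = pd := L8

lemma K2 : pC * pD = pb := by
  calc pC * pD = pC * (pD * pd * pc * pb) := by rw [L4]
    _ = pC * pD * pd * pc * pb := by simp only [mul_assoc]
    _ = pb := L6

lemma M : pd * pc = pB := by
  calc pd * pc = pB * pC * pD * pd * pc := by rw [L8]
    _ = pB := L2

lemma K3 : pD * pB = pc := by
  calc pD * pB = pD * (pd * pc) := by rw [M]
    _ = pD * pd * pc := by simp only [mul_assoc]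
    _ = pc := L7

lemma N1 : pc * pb = pD := by
  calc pc * pb = pD * pd * pc * pb := by rw [L7]
    _ = pD := L4

lemma G2 : pB * pC * pD * pB = pB := by
  calc pB * pC * pD * pB = pB * pC * (pD * pB) := by simp only [mul_assoc]
    _ = pB * pC * pc := by rw [K3]
    _ = pd * pc := by rw [K1]
    _ = pB := M

lemma G3 : pC * pD * pB * pC = pC := by
  calc pC * pD * pB * pC = pC * pD * (pB * pC) := by simp only [mul_assoc]
    _ = pC * pD * pd := by rw [K1]
    _ = pC := L3

lemma G4 : pD * pB * pC * pD = pD := by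
  calc pD * pB * pC * pD = pD * pB * (pC * pD) := by simp only [mul_assoc]
    _ = pc * pb := by rw [K3, K2]
    _ = pD := N1

lemma RT1 : pB * pC * (pD * pa) = pa := by
  calc pB * pC * (pD * pa) = pB * (pC * pD) * pa := by simp only [mul_assoc]
    _ = pB * pb * pa := by rw [K2]
    _ = pd * pc * pb * pa := by rw [← M]
    _ = pa := L5

end P1side

section P2side
open Alpha2

abbrev qA : Q2 := x2 A
abbrev qB : Q2 := x2 B
abbrev qC : Q2 := x2 C
abbrev qD : Q2 := x2 D
abbrev qE : Q2 := x2 E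

lemma R1 : qA * qB * qC * qD = qA := by
  simpa using (rel2 (Or.inl ⟨rfl, rfl⟩)).symm
lemma R2 : qB * qC * qD * qB = qB := by
  simpa using (rel2 (Or.inr (Or.inl ⟨rfl, rfl⟩))).symm
lemma R3 : qC * qD * qB * qC = qC := by
  simpa using (rel2 (Or.inr (Or.inr (Or.inl ⟨rfl, rfl⟩)))).symm
lemma R4 : qD * qB * qC * qD = qD := by
  simpa using (rel2 (Or.inr (Or.inr (Or.inr (Or.inl ⟨rfl, rfl⟩))))).symm
lemma R5 : qD * qB * qC * qE = qE := by
  simpa using (rel2 (Or.inr (Or.inr (Or.inr (Or.inr ⟨rfl, rfl⟩))))).symm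

end P2side

/-- The map on generators `Alpha1 → Q2`. -/
def psi0 : Alpha1 → Q2
  | .A => qA
  | .B => qB
  | .C => qC
  | .D => qD
  | .Abar => qB * qC * qE
  | .Bbar => qC * qD
  | .Cbar => qD * qB
  | .Dbar => qB * qC

/-- The map on generators `Alpha2 → Q1`. -/
def phi0 : Alpha2 → Q1
  | .A => pA
  | .B => pB
  | .C => pC
  | .D => pD
  | .E => pD * pa

def psiF : FreeSemigroup Alpha1 →ₙ* Q2 := FreeSemigroup.lift psi0
def phiF : FreeSemigroup Alpha2 →ₙ* Q1 := FreeSemigroup.lift phi0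

lemma psiF_resp : ∀ u v, Alpha1.rels u v → psiF u = psiF v := by
  rintro u v (⟨rfl, rfl⟩ | ⟨rfl, rfl⟩ | ⟨rfl, rfl⟩ | ⟨rfl, rfl⟩ | ⟨rfl, rfl⟩ | ⟨rfl, rfl⟩ |
    ⟨rfl, rfl⟩ | ⟨rfl, rfl⟩) <;>
    simp only [psiF, Alpha1.w, map_mul, FreeSemigroup.lift_of, psi0, ← mul_assoc]
  · rw [R1]
  · rw [R2, R2]
  · rw [R3]
  · rw [R4, R4]
  · rw [R2, R2]
  · rw [R3, R3]
  · rw [R4]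
  · rw [R2]

lemma phiF_resp : ∀ u v, Alpha2.rels u v → phiF u = phiF v := by
  rintro u v (⟨rfl, rfl⟩ | ⟨rfl, rfl⟩ | ⟨rfl, rfl⟩ | ⟨rfl, rfl⟩ | ⟨rfl, rfl⟩) <;>
    simp only [phiF, Alpha2.w, map_mul, FreeSemigroup.lift_of, phi0, ← mul_assoc]
  · rw [L1]
  · rw [G2]
  · rw [G3]
  · rw [G4]
  · rw [G4]

lemma psi_le : conGen Alpha1.rels ≤ Con.ker psiF :=
  Con.conGen_le.2 psiF_resp

lemma phi_le : conGen Alpha2.rels ≤ Con.ker phiF :=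
  Con.conGen_le.2 phiF_resp

def psiH : Q1 →ₙ* Q2 := conLift _ psiF fun _ _ h => psi_le h
def phiH : Q2 →ₙ* Q1 := conLift _ phiF fun _ _ h => phi_le h

@[simp] lemma psiH_coe (u : FreeSemigroup Alpha1) : psiH (u : Q1) = psiF u := rfl
@[simp] lemma phiH_coe (u : FreeSemigroup Alpha2) : phiH (u : Q2) = phiF u := rfl

lemma left_inv : ∀ q : Q1, phiH (psiH q) = q := by
  intro q
  induction q using Con.induction_on with
  | _ u =>
    induction u with
    | ih1 x =>
      cases x
      case A => rfl
      case B => rfl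
      case C => rfl
      case D => rfl
      case Abar =>
        show phiH (qB * qC * qE) = pa
        rw [map_mul, map_mul]
        show pB * pC * (pD * pa) = pa
        exact RT1
      case Bbar =>
        show phiH (qC * qD) = pb
        rw [map_mul]
        exact K2
      case Cbar =>
        show phiH (qD * qB) = pc
        rw [map_mul]
        exact K3
      case Dbar =>
        show phiH (qB * qC) = pd
        rw [map_mul]
        exact K1
    | ih2 x y hx hy =>
      rw [Con.coe_mul, map_mul, map_mul, hx, hy]

lemma right_inv : ∀ q : Q2, psiH (phiH q) = q := by
  intro q
  induction q using Con.induction_on with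
  | _ u =>
    induction u with
    | ih1 x =>
      cases x
      case A => rfl
      case B => rfl
      case C => rfl
      case D => rfl
      case E =>
        show psiH (pD * pa) = qE
        rw [map_mul]
        show qD * (qB * qC * qE) = qE
        calc qD * (qB * qC * qE) = qD * qB * qC * qE := by simp only [mul_assoc]
          _ = qE := R5
    | ih2 x y hx hy =>
      rw [Con.coe_mul, map_mul, map_mul, hx, hy]

def theIso : Q1 ≃* Q2 where
  toFun := psiH
  invFun := phiH
  left_inv := left_inv
  right_inv := right_inv
  map_mul' := map_mul psiH

end IsoProof

/-- The semigroup presented by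
`⟨A,B,C,D,Ā,B̄,C̄,D̄ ∣ A=ABCD, B=BCDD̄C̄, C=CDD̄, D=DD̄C̄B̄, Ā=D̄C̄B̄Ā, B̄=CDD̄C̄B̄, C̄=DD̄C̄, D̄=BCDD̄⟩`
is isomorphic to the semigroup presented by
`⟨A,B,C,D,E ∣ A=ABCD, B=BCDB, C=CDBC, D=DBCD, E=DBCE⟩`. -/
theorem presented_semigroups_isomorphic :
    Nonempty ((conGen Alpha1.rels).Quotient ≃* (conGen Alpha2.rels).Quotient) := by
  exact ⟨IsoProof.theIso⟩
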